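/- arXiv:1108.5522 — 2 statements merged into one kernel-verified Lean document; each statement's English description precedes it below -/
import Mathlib

section
/- Given A ∈ ℂ^{m×n}, B ∈ ℂ^{p×q}, D ∈ ℂ^{m×q}, the set of least squares solutions of AXB = D is exactly {A⁺DB⁺ + (I_n − A⁺A)V + W(I_p − BB⁺) : V, W ∈ ℂ^{n×p}}, and X_LS = A⁺DB⁺ is the least squares solution of minimum Frobenius norm. -/
open Matrix

/-- The four Penrose equations defining the Moore–Penrose inverse of a complex matrix. -/
def IsMoorePenrose {m n : ℕ} (A : Matrix (Fin m) (Fin n) ℂ)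
    (X : Matrix (Fin n) (Fin m) ℂ) : Prop :=
  (A * X)ᴴ = A * X ∧ (X * A)ᴴ = X * A ∧ A * X * A = A ∧ X * A * X = X

/-- The principal minor of a square matrix `M` determined by the index set `β`. -/
noncomputable def pminor {n : ℕ} (M : Matrix (Fin n) (Fin n) ℂ) (β : Finset (Fin n)) : ℂ :=
  (M.submatrix (Subtype.val : β → Fin n) (Subtype.val : β → Fin n)).det

/-- The Frobenius norm of a complex matrix. -/
noncomputable def frob {m n : ℕ} (M : Matrix (Fin m) (Fin n) ℂ) : ℝ :=
  Real.sqrt (∑ i, ∑ j, ‖M i j‖ ^ 2)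

/-- Square of the Frobenius norm. -/
noncomputable def fsq {m n : ℕ} (M : Matrix (Fin m) (Fin n) ℂ) : ℝ :=
  ∑ i, ∑ j, ‖M i j‖ ^ 2

lemma frob_eq {m n : ℕ} (M : Matrix (Fin m) (Fin n) ℂ) : frob M = Real.sqrt (fsq M) := rfl

lemma fsq_nonneg {m n : ℕ} (M : Matrix (Fin m) (Fin n) ℂ) : 0 ≤ fsq M := by
  apply Finset.sum_nonneg; intro i _; apply Finset.sum_nonneg; intro j _; positivity

lemma fsq_zero {m n : ℕ} : fsq (0 : Matrix (Fin m) (Fin n) ℂ) = 0 := by simp [fsq]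

lemma fsq_eq_zero {m n : ℕ} (M : Matrix (Fin m) (Fin n) ℂ) (h : fsq M ≤ 0) : M = 0 := by
  have h0 : fsq M = 0 := le_antisymm h (fsq_nonneg M)
  ext i j
  have := (Finset.sum_eq_zero_iff_of_nonneg (fun i _ => Finset.sum_nonneg
    (fun j _ => by positivity))).mp h0 i (Finset.mem_univ i)
  have := (Finset.sum_eq_zero_iff_of_nonneg (fun j _ => by positivity)).mp this j (Finset.mem_univ j)
  simpa using pow_eq_zero_iff (n := 2) (by norm_num) |>.mp this

lemma trace_herm {m n : ℕ} (M N : Matrix (Fin m) (Fin n) ℂ) :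
    (trace (Mᴴ * N)).re = ∑ i, ∑ j, ((starRingEnd ℂ) (M i j) * N i j).re := by
  have : trace (Mᴴ * N) = ∑ i, ∑ j, (starRingEnd ℂ) (M i j) * N i j := by
    simp [Matrix.trace, Matrix.diag, Matrix.mul_apply, Matrix.conjTranspose_apply]
    rw [Finset.sum_comm]
  rw [this, Complex.re_sum]
  exact Finset.sum_congr rfl fun i _ => Complex.re_sum _ _

lemma fsq_add {m n : ℕ} (M N : Matrix (Fin m) (Fin n) ℂ) (h : trace (Mᴴ * N) = 0) :
    fsq (M + N) = fsq M + fsq N := by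
  have key : ∀ i j, ‖(M + N) i j‖ ^ 2
      = ‖M i j‖ ^ 2 + ‖N i j‖ ^ 2
        + 2 * ((starRingEnd ℂ) (M i j) * N i j).re := by
    intro i j
    simp only [Matrix.add_apply, Complex.sq_norm, Complex.normSq_add]
    congr 1
    have : ((starRingEnd ℂ) (M i j) * N i j) = (starRingEnd ℂ) (M i j * (starRingEnd ℂ) (N i j)) := by
      rw [_root_.map_mul, Complex.conj_conj]
    rw [this, Complex.conj_re]
  have hre : (trace (Mᴴ * N)).re = 0 := by rw [h]; simp
  rw [trace_herm] at hre
  simp only [fsq, key, Finset.sum_add_distrib]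
  have : ∑ i : Fin m, ∑ j : Fin n, 2 * ((starRingEnd ℂ) (M i j) * N i j).re
      = 2 * ∑ i : Fin m, ∑ j : Fin n, ((starRingEnd ℂ) (M i j) * N i j).re := by
    simp [Finset.mul_sum]
  rw [this, hre]
  ring

lemma trace_orth {a b : ℕ} (P : Matrix (Fin a) (Fin a) ℂ) (Q : Matrix (Fin b) (Fin b) ℂ)
    (hP : Pᴴ = P) (hQ : Qᴴ = Q) (M N : Matrix (Fin a) (Fin b) ℂ)
    (hM : P * M * Q = M) (hN : P * N * Q = 0) :
    trace (Mᴴ * N) = 0 := by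
  calc trace (Mᴴ * N) = trace ((P * M * Q)ᴴ * N) := by rw [hM]
    _ = trace (Q * (Mᴴ * (P * N))) := by
        rw [conjTranspose_mul, conjTranspose_mul, hP, hQ]
        simp only [Matrix.mul_assoc]
    _ = trace (Mᴴ * (P * N * Q)) := by
        rw [Matrix.trace_mul_comm]
        simp only [Matrix.mul_assoc]
    _ = 0 := by rw [hN, Matrix.mul_zero, Matrix.trace_zero]

lemma frob_mono {a b : ℕ} {M N : Matrix (Fin a) (Fin b) ℂ} (h : fsq M ≤ fsq N) :
    frob M ≤ frob N := by
  rw [frob_eq, frob_eq]; exact Real.sqrt_le_sqrt h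

lemma fsq_mono_of_frob {a b : ℕ} {M N : Matrix (Fin a) (Fin b) ℂ} (h : frob M ≤ frob N) :
    fsq M ≤ fsq N := by
  rw [frob_eq, frob_eq] at h
  exact (Real.sqrt_le_sqrt_iff (fsq_nonneg N)).mp h

theorem least_squares_AXB_eq_D {m n p q : ℕ} (A : Matrix (Fin m) (Fin n) ℂ)
    (B : Matrix (Fin p) (Fin q) ℂ) (D : Matrix (Fin m) (Fin q) ℂ)
    (Ap : Matrix (Fin n) (Fin m) ℂ) (Bp : Matrix (Fin q) (Fin p) ℂ)
    (hAp : IsMoorePenrose A Ap) (hBp : IsMoorePenrose B Bp) :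
    ({X : Matrix (Fin n) (Fin p) ℂ | ∀ Y : Matrix (Fin n) (Fin p) ℂ, frob (A * X * B - D) ≤ frob (A * Y * B - D)}
      = {X | ∃ V W : Matrix (Fin n) (Fin p) ℂ,
          X = Ap * D * Bp + (1 - Ap * A) * V + W * (1 - B * Bp)}) ∧
    (∀ Y : Matrix (Fin n) (Fin p) ℂ, frob (A * (Ap * D * Bp) * B - D) ≤ frob (A * Y * B - D)) ∧
    (∀ X : Matrix (Fin n) (Fin p) ℂ, (∀ Y : Matrix (Fin n) (Fin p) ℂ, frob (A * X * B - D) ≤ frob (A * Y * B - D)) →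
      frob (Ap * D * Bp) ≤ frob X) := by
  obtain ⟨hA1, hA2, hA3, hA4⟩ := hAp
  obtain ⟨hB1, hB2, hB3, hB4⟩ := hBp
  -- basic consequences
  have hB3' : B * (Bp * B) = B := by rw [← Matrix.mul_assoc, hB3]
  have hproj : ∀ Z : Matrix (Fin n) (Fin p) ℂ,
      (A * Ap) * (A * Z * B) * (Bp * B) = A * Z * B := by
    intro Z
    simp only [Matrix.mul_assoc]
    rw [hB3', ← Matrix.mul_assoc, ← Matrix.mul_assoc, hA3]
  have hPDQ : (A * Ap) * D * (Bp * B) = A * (Ap * D * Bp) * B := by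
    simp only [Matrix.mul_assoc]
  have key : ∀ X : Matrix (Fin n) (Fin p) ℂ,
      fsq (A * X * B - D)
        = fsq (A * X * B - A * (Ap * D * Bp) * B) + fsq (A * (Ap * D * Bp) * B - D) := by
    intro X
    have hd : A * X * B - D
        = (A * X * B - A * (Ap * D * Bp) * B) + (A * (Ap * D * Bp) * B - D) := by abel
    rw [hd]
    refine fsq_add _ _ (trace_orth (A * Ap) (Bp * B) hA1 hB2 _ _ ?_ ?_)
    · rw [Matrix.mul_sub, Matrix.sub_mul, hproj X, hproj (Ap * D * Bp)]
    · rw [Matrix.mul_sub, Matrix.sub_mul, hproj (Ap * D * Bp), hPDQ, sub_self]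
  -- solutions are exactly X with A X B = A X₀ B
  have hsol : ∀ X : Matrix (Fin n) (Fin p) ℂ, A * X * B = A * (Ap * D * Bp) * B →
      ∀ Y : Matrix (Fin n) (Fin p) ℂ, frob (A * X * B - D) ≤ frob (A * Y * B - D) := by
    intro X hX Y
    apply frob_mono
    rw [key X, key Y, hX, sub_self, fsq_zero, zero_add]
    exact le_add_of_nonneg_left (fsq_nonneg _)
  have hmin : ∀ X : Matrix (Fin n) (Fin p) ℂ,
      (∀ Y : Matrix (Fin n) (Fin p) ℂ, frob (A * X * B - D) ≤ frob (A * Y * B - D)) →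
      A * X * B = A * (Ap * D * Bp) * B := by
    intro X hX
    have hf : fsq (A * X * B - D) ≤ fsq (A * (Ap * D * Bp) * B - D) :=
      fsq_mono_of_frob (hX (Ap * D * Bp))
    rw [key X, key (Ap * D * Bp), sub_self, fsq_zero, zero_add] at hf
    have h0 : fsq (A * X * B - A * (Ap * D * Bp) * B) ≤ 0 := by linarith [fsq_nonneg (A * (Ap * D * Bp) * B - D)]
    exact sub_eq_zero.mp (fsq_eq_zero _ h0)
  refine ⟨?_, hsol (Ap * D * Bp) rfl, ?_⟩
  · ext X
    simp only [Set.mem_setOf_eq]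
    constructor
    · intro hX
      have hAXB := hmin X hX
      refine ⟨X - Ap * D * Bp, Ap * A * (X - Ap * D * Bp), ?_⟩
      have hZ : A * (X - Ap * D * Bp) * B = 0 := by
        rw [Matrix.mul_sub, Matrix.sub_mul, hAXB, sub_self]
      have hW0 : Ap * A * (X - Ap * D * Bp) * (B * Bp) = 0 := by
        have h := congrArg (fun M => Ap * M * Bp) hZ
        simp only [Matrix.mul_assoc, Matrix.mul_zero, Matrix.zero_mul] at h
        simp only [Matrix.mul_assoc]
        exact h
      rw [Matrix.mul_sub (Ap * A * (X - Ap * D * Bp)) 1 (B * Bp), Matrix.mul_one, hW0,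
        sub_zero, Matrix.sub_mul 1 (Ap * A) (X - Ap * D * Bp), Matrix.one_mul]
      abel
    · rintro ⟨V, W, hX⟩ Y
      apply hsol
      have hA0 : A * (1 - Ap * A) = 0 := by
        rw [Matrix.mul_sub, Matrix.mul_one, ← Matrix.mul_assoc, hA3, sub_self]
      have hB0 : (1 - B * Bp) * B = 0 := by
        rw [Matrix.sub_mul, Matrix.one_mul, hB3, sub_self]
      have hu : A * ((1 - Ap * A) * V) * B = 0 := by
        rw [← Matrix.mul_assoc, hA0, Matrix.zero_mul, Matrix.zero_mul]
      have hw : A * (W * (1 - B * Bp)) * B = 0 := by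
        simp only [Matrix.mul_assoc]
        rw [hB0, Matrix.mul_zero, Matrix.mul_zero]
      rw [hX, Matrix.mul_add, Matrix.mul_add, Matrix.add_mul, Matrix.add_mul, hu, hw,
        add_zero, add_zero]
  · intro X hX
    have hAXB := hmin X hX
    have hB4tail : Bp * (B * Bp) = Bp := by rw [← Matrix.mul_assoc, hB4]
    have hSX0 : (Ap * A) * (Ap * D * Bp) * (B * Bp) = Ap * D * Bp := by
      simp only [Matrix.mul_assoc]
      rw [hB4tail, ← Matrix.mul_assoc, ← Matrix.mul_assoc, hA4]
    have hSZ : (Ap * A) * (X - Ap * D * Bp) * (B * Bp) = 0 := by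
      have t : (Ap * A) * X * (B * Bp) = Ap * (A * X * B) * Bp := by
        simp only [Matrix.mul_assoc]
      rw [Matrix.mul_sub, Matrix.sub_mul, t, hAXB, hSX0]
      apply sub_eq_zero_of_eq
      simp only [Matrix.mul_assoc]
      rw [hB4tail, ← Matrix.mul_assoc, ← Matrix.mul_assoc, hA4]
    have hsplit : fsq X = fsq (Ap * D * Bp) + fsq (X - Ap * D * Bp) := by
      have hd : X = Ap * D * Bp + (X - Ap * D * Bp) := by abel
      conv_lhs => rw [hd]
      exact fsq_add _ _ (trace_orth (Ap * A) (B * Bp) hA2 hB1 _ _ hSX0 hSZ)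
    apply frob_mono
    rw [hsplit]
    exact le_add_of_nonneg_right (fsq_nonneg _)
end

section
/- Let A ∈ ℂ^{m×n} have rank m, and B ∈ ℂ^{s×n}. Then the minimum-norm least squares solution X_LS = BA⁺ of XA = B has entries x_{ij} = det((AA*)_{j.}(b̌_{i.})) / det(AA*), where B̌ = BA* and (AA*)_{j.}(b̌_{i.}) denotes AA* with its j-th row replaced by the i-th row of B̌. -/
open Matrix

lemma AAH_det_isUnit {m n : ℕ} (A : Matrix (Fin m) (Fin n) ℂ) (hA : A.rank = m) :
    IsUnit (A * Aᴴ).det := by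
  open ComplexOrder in
  have h : (A * Aᴴ).rank = m := by rw [A.rank_self_mul_conjTranspose, hA]
  rw [← Matrix.isUnit_iff_isUnit_det, ← Matrix.mulVec_surjective_iff_isUnit]
  have hr : Module.finrank ℂ (LinearMap.range (A * Aᴴ).mulVecLin)
      = Module.finrank ℂ (Fin m → ℂ) := by
    rw [Module.finrank_pi]
    simpa [Matrix.rank] using h
  have htop : LinearMap.range (A * Aᴴ).mulVecLin = ⊤ :=
    Submodule.eq_top_of_finrank_eq hr
  intro b
  obtain ⟨x, hx⟩ := (LinearMap.range_eq_top.mp htop) b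
  exact ⟨x, hx⟩

theorem cramer_XA_full_rank {m n s : ℕ} (A : Matrix (Fin m) (Fin n) ℂ)
    (hA : A.rank = m) (B : Matrix (Fin s) (Fin n) ℂ)
    (Ap : Matrix (Fin n) (Fin m) ℂ) (hAp : IsMoorePenrose A Ap)
    (i : Fin s) (j : Fin m) :
    (B * Ap) i j =
      ((A * Aᴴ).updateRow j (fun k => (B * Aᴴ) i k)).det / (A * Aᴴ).det := by
  obtain ⟨h1, h2, h3, h4⟩ := hAp
  set M := A * Aᴴ with hM
  have hdet : IsUnit M.det := AAH_det_isUnit A hA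
  -- A * Ap = 1
  have hAAp : A * Ap = 1 := by
    have e1 : (A * Ap) * M = M := by
      rw [hM, ← Matrix.mul_assoc, h3]
    calc A * Ap = (A * Ap) * M * M⁻¹ := by
          rw [Matrix.mul_assoc, Matrix.mul_nonsing_inv _ hdet, Matrix.mul_one]
      _ = M * M⁻¹ := by rw [e1]
      _ = 1 := Matrix.mul_nonsing_inv _ hdet
  -- Ap * M = Aᴴ
  have hApM : Ap * M = Aᴴ := by
    have : Ap * A * Aᴴ = (Ap * A)ᴴ * Aᴴ := by rw [h2]
    calc Ap * M = Ap * A * Aᴴ := by rw [hM, Matrix.mul_assoc]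
      _ = (Ap * A)ᴴ * Aᴴ := by rw [h2]
      _ = Aᴴ * (Apᴴ * Aᴴ) := by rw [Matrix.conjTranspose_mul, Matrix.mul_assoc]
      _ = Aᴴ * (A * Ap)ᴴ := by rw [Matrix.conjTranspose_mul]
      _ = Aᴴ := by rw [hAAp, Matrix.conjTranspose_one, Matrix.mul_one]
  have hBAp : B * Ap = (B * Aᴴ) * M⁻¹ := by
    calc B * Ap = B * (Ap * M) * M⁻¹ := by
          rw [← Matrix.mul_assoc B Ap M, Matrix.mul_assoc (B * Ap) M M⁻¹,
            Matrix.mul_nonsing_inv _ hdet, Matrix.mul_one]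
      _ = (B * Aᴴ) * M⁻¹ := by rw [hApM]
  have key := Matrix.det_smul_inv_vecMul_eq_cramer_transpose M (fun k => (B * Aᴴ) i k) hdet
  have hvec : ((fun k => (B * Aᴴ) i k) ᵥ* M⁻¹) j = (B * Ap) i j := by
    rw [hBAp]
    simp [Matrix.vecMul, Matrix.mul_apply, dotProduct]
  have hj := congrFun key j
  simp only [Pi.smul_apply, smul_eq_mul] at hj
  rw [hvec] at hj
  rw [Matrix.cramer_transpose_apply] at hj
  rw [eq_div_iff hdet.ne_zero, mul_comm]
  exact hj
end
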